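/- Let n ≥ 2, let D be a finite set with |D| ≥ 2, set A_k = X_k = D for all k ∈ {1,…,n}, and define the n-partite global cyclic loop w : D^n → D^n by w_k(a) = a_{k+1 mod n} (so each party's input is the next party's output, cyclically). Then: (a) for every party k and every fixed a_k ∈ D, the output-reduced function w^{a_k} is a valid (n−1)-partite process function; but (b) w is not an n-partite process function — in particular, for the identity local intervention f_k = id, the map x ↦ w(f(x)) has |D| ≥ 2 fixed points. -/

import Mathlib

noncomputable section

/-- A (multipartite) process function over an index type `ι`: for every local
intervention `f = (f_k)_k` (each `f_k : X_k → A_k`) there is exactly one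
fixed point `x ∈ ∏_k X_k` with `w (f (x)) = x` (unique fixed-point property). -/
def IsProcessFunction {ι : Type} {A X : ι → Type}
    (w : (∀ k, A k) → ∀ k, X k) : Prop :=
  ∀ f : ∀ k, X k → A k, ∃! x : ∀ k, X k, (w fun k => f k (x k)) = x

/-- `w` is non-self-signaling: its `k`-th component does not depend on the
`k`-th party's own output. -/
def NonSelfSignaling {ι : Type} {A X : ι → Type}
    (w : (∀ k, A k) → ∀ k, X k) : Prop :=
  ∀ (k : ι) (a a' : ∀ j, A j), (∀ j, j ≠ k → a j = a' j) → w a k = w a' k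

/-- Extend a family defined on `{j // j ≠ k}` by a value at `k`. -/
def extendAt {ι : Type} [DecidableEq ι] {A : ι → Type} (k : ι)
    (a : ∀ j : {j : ι // j ≠ k}, A j) (b : A k) : ∀ j, A j :=
  fun j => if h : j = k then cast (congrArg A h).symm b else a ⟨j, h⟩

/-- The `k`-th component of a (non-self-signaling) `w`, as a function
`w_k : ∏_{j ≠ k} A_j → X_k` of the other parties' outputs. -/
def component {ι : Type} [DecidableEq ι] {A X : ι → Type}
    [∀ k, Nonempty (A k)] (w : (∀ k, A k) → ∀ k, X k) (k : ι)
    (a : ∀ j : {j : ι // j ≠ k}, A j) : X k :=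
  w (extendAt k a (Classical.arbitrary (A k))) k

/-- The reduced function `w^{f_k} : ∏_{j≠k} A_j → ∏_{j≠k} X_j`, defined by
`w^{f_k}(a_{∖k}) = w_{∖k}(a_{∖k}, f_k(w_k(a_{∖k})))`. -/
def reducedFn {ι : Type} [DecidableEq ι] {A X : ι → Type}
    [∀ k, Nonempty (A k)] (w : (∀ k, A k) → ∀ k, X k) (k : ι)
    (f : X k → A k) (a : ∀ j : {j : ι // j ≠ k}, A j) :
    ∀ j : {j : ι // j ≠ k}, X j :=
  fun j => w (extendAt k a (f (component w k a))) j

/-- The output-reduced function `w^{a_k}`: the reduced function of the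
constant intervention `f_k ≡ b`, `w^{b}(a_{∖k}) = w_{∖k}(a_{∖k}, b)`. -/
def outputReducedFn {ι : Type} [DecidableEq ι] {A X : ι → Type}
    [∀ k, Nonempty (A k)] (w : (∀ k, A k) → ∀ k, X k) (k : ι) (b : A k) :
    (∀ j : {j : ι // j ≠ k}, A j) → ∀ j : {j : ι // j ≠ k}, X j :=
  reducedFn w k (fun _ => b)

/-- **The global cyclic loop is not a process function, although all its
output-reduced functions are**: for `n ≥ 2` parties with common output/input
set `D` (`|D| ≥ 2`), the cyclic loop `w_k(a) = a_{k+1 (mod n)}` satisfies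
(a) every output-reduced function `w^{a_k}` is a valid `(n−1)`-partite
process function; but (b) `w` is not an `n`-partite process function — in
particular, for the identity local intervention the fixed-point equation
`w x = x` has exactly `|D| ≥ 2` solutions. -/
lemma myCoeSubOne {n : ℕ} [NeZero n] {a : Fin n} (ha : a ≠ 0) :
    ((a - 1 : Fin n) : ℕ) = (a : ℕ) - 1 := by
  cases n with
  | zero => exact a.elim0
  | succ m => rw [Fin.coe_sub_one, if_neg ha]

lemma finSubPos {n : ℕ} [NeZero n] {k j : Fin n} (h : j ≠ k) : 1 ≤ ((k - j : Fin n) : ℕ) := by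
  have h0 : k - j ≠ 0 := sub_ne_zero.mpr (Ne.symm h)
  have : ((k - j : Fin n) : ℕ) ≠ 0 := fun hc => h0 (Fin.ext (by simpa using hc))
  omega

lemma outputReduced_eval {n : ℕ} [NeZero n] {D : Type} [Nonempty D]
    (w : (∀ _ : Fin n, D) → ∀ _ : Fin n, D)
    (hwdef : ∀ (a : Fin n → D) (k : Fin n), w a k = a (k + 1)) (k : Fin n) (b : D)
    (a : ∀ _ : {j : Fin n // j ≠ k}, D) (j : {j : Fin n // j ≠ k}) :
    outputReducedFn (A := fun _ : Fin n => D) (X := fun _ : Fin n => D) w k b a j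
      = if h : ((j : Fin n) + 1 = k) then b else a ⟨(j : Fin n) + 1, h⟩ := by
  show w (extendAt k a b) (j : Fin n) = _
  rw [hwdef]
  rfl

lemma iterate_const {n : ℕ} [NeZero n] {D : Type} (k : Fin n) (b : D)
    (f : ∀ _ : {j : Fin n // j ≠ k}, D → D)
    (G : (∀ _ : {j : Fin n // j ≠ k}, D) → ∀ _ : {j : Fin n // j ≠ k}, D)
    (hG : ∀ x j, G x j = if h : ((j : Fin n) + 1 = k) then b
        else f ⟨(j : Fin n) + 1, h⟩ (x ⟨(j : Fin n) + 1, h⟩)) :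
    ∀ (m : ℕ) (x z : ∀ _ : {j : Fin n // j ≠ k}, D) (j : {j : Fin n // j ≠ k}),
      ((k - (j : Fin n) : Fin n) : ℕ) ≤ m → G^[m] x j = G^[m] z j := by
  intro m
  induction m with
  | zero =>
    intro x z j hj
    exact absurd hj (by have := finSubPos j.2; omega)
  | succ m ih =>
    intro x z j hj
    rw [Function.iterate_succ_apply', Function.iterate_succ_apply', hG, hG]
    split
    · rfl
    · rename_i h
      congr 1
      apply ih
      have e : k - ((j : Fin n) + 1) = (k - (j : Fin n)) - 1 :=
        sub_add_eq_sub_sub k (j : Fin n) 1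
      have hne : k - (j : Fin n) ≠ 0 := sub_ne_zero.mpr (Ne.symm j.2)
      have h1 := finSubPos j.2
      rw [e, myCoeSubOne hne]
      omega

theorem globalLoop_not_processFunction
    {n : ℕ} [NeZero n] (hn : 2 ≤ n)
    (D : Type) [Fintype D] [DecidableEq D] [Nonempty D] (hD : 2 ≤ Fintype.card D)
    (w : (∀ _ : Fin n, D) → ∀ _ : Fin n, D)
    (hwdef : ∀ (a : Fin n → D) (k : Fin n), w a k = a (k + 1)) :
    (∀ (k : Fin n) (b : D),
        IsProcessFunction
          (outputReducedFn (A := fun _ : Fin n => D) (X := fun _ : Fin n => D)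
            w k b)) ∧
    ¬ IsProcessFunction (A := fun _ : Fin n => D) (X := fun _ : Fin n => D) w ∧
    Fintype.card {x : Fin n → D // w (fun k => id (x k)) = x} =
      Fintype.card D := by
  -- any fixed point of w is constant
  have hconst : ∀ x : Fin n → D, w x = x → ∀ k : Fin n, x k = x 0 := by
    intro x hx
    have step : ∀ j : Fin n, x (j + 1) = x j := by
      intro j
      have := congrFun hx j
      rwa [hwdef] at this
    open Fin.NatCast in
    have hm : ∀ m : ℕ, x (m : Fin n) = x 0 := by
      intro m
      induction m with
      | zero => norm_num
      | succ m ih =>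
        have e : ((m + 1 : ℕ) : Fin n) = (m : Fin n) + 1 := by push_cast; ring
        rw [e, step, ih]
    intro k
    have := hm k.val
    rwa [Fin.cast_val_eq_self] at this
  refine ⟨?_, ?_, ?_⟩
  · -- (a) output-reduced functions are process functions
    intro k b f
    set G : (∀ _ : {j : Fin n // j ≠ k}, D) → ∀ _ : {j : Fin n // j ≠ k}, D :=
      fun x j => if h : ((j : Fin n) + 1 = k) then b
        else f ⟨(j : Fin n) + 1, h⟩ (x ⟨(j : Fin n) + 1, h⟩) with hGdef
    have hG : ∀ x j, G x j = if h : ((j : Fin n) + 1 = k) then b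
        else f ⟨(j : Fin n) + 1, h⟩ (x ⟨(j : Fin n) + 1, h⟩) := fun _ _ => rfl
    have key : ∀ x, (outputReducedFn (A := fun _ : Fin n => D)
        (X := fun _ : Fin n => D) w k b fun j => f j (x j)) = G x := by
      intro x
      funext j
      rw [outputReduced_eval w hwdef k b _ j]
    have hcn : ∀ x z, G^[n] x = G^[n] z := by
      intro x z
      funext j
      exact iterate_const k b f G hG n x z j (Fin.is_lt _).le
    refine ⟨G^[n] (fun _ => b), ?_, ?_⟩
    · exact (key _).trans
        (calc G (G^[n] fun _ => b) = G^[n+1] (fun _ => b) :=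
              (Function.iterate_succ_apply' G n _).symm
          _ = G^[n] (G fun _ => b) := Function.iterate_succ_apply G n _
          _ = G^[n] (fun _ => b) := hcn _ _)
    · intro z hz
      have hz' : G z = z := (key z).symm.trans hz
      calc z = G^[n] z := (Function.iterate_fixed hz' n).symm
        _ = G^[n] (fun _ => b) := hcn _ _
  · -- (b) w is not a process function
    intro h
    obtain ⟨x, -, hu⟩ := h (fun _ => id)
    obtain ⟨c, c', hcc⟩ := Fintype.exists_pair_of_one_lt_card (α := D) (by omega)
    have hfix : ∀ d : D, w (fun k => id ((fun _ : Fin n => d) k)) = fun _ => d := by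
      intro d
      funext j
      exact hwdef _ j
    have h1 := hu (fun _ => c) (hfix c)
    have h2 := hu (fun _ => c') (hfix c')
    exact hcc (congrFun (h1.trans h2.symm) 0)
  · -- (c) fixed points ↔ D
    refine Fintype.card_congr ⟨fun x => x.1 0, fun c => ⟨fun _ => c, ?_⟩, ?_, fun c => rfl⟩
    · funext j
      exact hwdef _ j
    · intro x
      apply Subtype.ext
      funext j
      exact (hconst x.1 x.2 j).symm

end
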